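/- Let n ≥ 1 and ε ≥ 0. Let (p_ℓ)_{ℓ∈L} be a finite probability distribution, let S_ℓ ⊆ {1,…,n} and let σ_ℓ be density matrices on (ℂ³)^{⊗n} satisfying Tr_{S_ℓ}(σ_ℓ) = Tr_{S_ℓ}(|Ψ_n⟩⟨Ψ_n|) for every ℓ, and set σ = Σ_ℓ p_ℓ σ_ℓ. Suppose the sites 1 ≤ i < j ≤ n satisfy Σ_{ℓ: i∈S_ℓ} p_ℓ ≤ 2ε and Σ_{ℓ: j∈S_ℓ} p_ℓ ≤ 2ε. Then Tr((A_i P_j^{(1)}) σ) ≤ 4ε, Tr(A_i σ) ≥ 1/2 − ε, and Tr(P_j^{(1)} σ) ≥ (n+1−j)/(2(n+1)) − ε. -/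

import Mathlib

open scoped Classical ComplexOrder
open Matrix

noncomputable section
namespace CatState

/-- The pattern `b^{⊗t} ⊗ |2⟩^{⊗(n-t)}` on `n` qutrits (`0`-based sites). -/
def catPat (n t : ℕ) (b : Fin 3) : Fin n → Fin 3 := fun i => if (i : ℕ) < t then b else 2

/-- The vector `ψ_t`: `ψ_0 = |2⟩^{⊗n}`, and for `t ≥ 1`,
`ψ_t = |Cat_t⟩ ⊗ |2⟩^{⊗(n-t)}` where `|Cat_t⟩ = (|0⟩^{⊗t} + |1⟩^{⊗t})/√2`. -/
def psi (n t : ℕ) : (Fin n → Fin 3) → ℂ :=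
  if t = 0 then fun x => if x = catPat n 0 0 then 1 else 0
  else fun x => (Real.sqrt 2 : ℂ)⁻¹ *
    ((if x = catPat n t 0 then 1 else 0) + (if x = catPat n t 1 then 1 else 0))

/-- The history cat state `Ψ_n = (1/√(n+1)) Σ_{t=0}^{n} ψ_t`. -/
def histCat (n : ℕ) : (Fin n → Fin 3) → ℂ :=
  fun x => (Real.sqrt (n + 1) : ℂ)⁻¹ * ∑ t ∈ Finset.range (n + 1), psi n t x

/-- The single-site operator acting as the projector onto the span of `{|a⟩ : a ∈ s}`
on qutrit `i` and as the identity elsewhere. -/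
def siteProj (n : ℕ) (i : Fin n) (s : Finset (Fin 3)) :
    Matrix (Fin n → Fin 3) (Fin n → Fin 3) ℂ :=
  Matrix.diagonal (fun x => if x i ∈ s then 1 else 0)

/-- `A_i = |0⟩⟨0| + |2⟩⟨2|` on qutrit `i`, identity elsewhere. -/
def opA (n : ℕ) (i : Fin n) : Matrix (Fin n → Fin 3) (Fin n → Fin 3) ℂ :=
  siteProj n i {0, 2}

/-- `B_i = |1⟩⟨1| + |2⟩⟨2|` on qutrit `i`, identity elsewhere. -/
def opB (n : ℕ) (i : Fin n) : Matrix (Fin n → Fin 3) (Fin n → Fin 3) ℂ :=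
  siteProj n i {1, 2}

/-- `P_i^{(1)} = |1⟩⟨1|` on qutrit `i`, identity elsewhere. -/
def opP1 (n : ℕ) (i : Fin n) : Matrix (Fin n → Fin 3) (Fin n → Fin 3) ℂ :=
  siteProj n i {1}


/-- Partial trace over the qudits in `S`: the unique linear map with
`Tr_S(M_1 ⊗ ⋯ ⊗ M_n) = (∏_{i∈S} Tr M_i) · ⊗_{i∉S} M_i`. -/
def ptrace {ι : Type} [Fintype ι] [DecidableEq ι] (q : ℕ) (S : Finset ι)
    (M : Matrix (ι → Fin q) (ι → Fin q) ℂ) :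
    Matrix ({i : ι // i ∉ S} → Fin q) ({i : ι // i ∉ S} → Fin q) ℂ :=
  fun x y => ∑ z : {i : ι // i ∈ S} → Fin q,
    M (fun i => if h : i ∈ S then z ⟨i, h⟩ else x ⟨i, h⟩)
      (fun i => if h : i ∈ S then z ⟨i, h⟩ else y ⟨i, h⟩)

/-- The rank-one outer product `|v⟩⟨v|`. -/
def outer {ι : Type} (v : ι → ℂ) : Matrix ι ι ℂ := fun x y => v x * star (v y)

/-- A density matrix: positive semidefinite with unit trace. -/
def IsDensityMatrix {ι : Type} [Fintype ι] (M : Matrix ι ι ℂ) : Prop :=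
  M.PosSemidef ∧ M.trace = 1

lemma trace_diag_mul {ι : Type} [Fintype ι] [DecidableEq ι] (d : ι → ℂ) (M : Matrix ι ι ℂ) :
    (Matrix.diagonal d * M).trace = ∑ x, d x * M x x := by
  simp [Matrix.trace, Matrix.diag, Matrix.mul_apply, Matrix.diagonal_apply]

lemma psd_diag_nonneg {ι : Type} [Fintype ι] [DecidableEq ι] {M : Matrix ι ι ℂ}
    (h : M.PosSemidef) (x : ι) : 0 ≤ M x x := by
  exact h.diag_nonneg



def mixE (n : ℕ) (S : Finset (Fin n)) :
    (({i : Fin n // i ∈ S} → Fin 3) × ({i : Fin n // i ∉ S} → Fin 3)) ≃ (Fin n → Fin 3) where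
  toFun p := fun i => if h : i ∈ S then p.1 ⟨i, h⟩ else p.2 ⟨i, h⟩
  invFun x := (fun k => x k.1, fun k => x k.1)
  left_inv p := by
    refine Prod.ext (funext fun k => ?_) (funext fun k => ?_)
    · simp [k.2]
    · simp [k.2]
  right_inv x := by
    funext i; by_cases h : i ∈ S <;> simp [h]

lemma sum_factor_ptrace {n : ℕ} (S : Finset (Fin n))
    (f : ({i : Fin n // i ∉ S} → Fin 3) → ℂ)
    (M : Matrix (Fin n → Fin 3) (Fin n → Fin 3) ℂ) :
    ∑ x, f (fun k => x k.1) * M x x = ∑ w, f w * ptrace 3 S M w w := by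
  rw [← Equiv.sum_comp (mixE n S) (fun x => f (fun k => x k.1) * M x x)]
  rw [Fintype.sum_prod_type, Finset.sum_comm]
  refine Finset.sum_congr rfl fun w _ => ?_
  rw [ptrace, Finset.mul_sum]
  refine Finset.sum_congr rfl fun z _ => ?_
  congr 1
  congr 1
  funext k
  simp [mixE, k.2]

lemma catPat_inj {n t s : ℕ} (ht : t ≤ n) (hs : s ≤ n) {b b' : Fin 3}
    (hb : b ≠ 2) (hb' : b' ≠ 2) (h : catPat n t b = catPat n s b') : t = s := by
  by_contra hne
  rcases Nat.lt_or_ge t s with hlt | hge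
  · have := congrFun h ⟨t, lt_of_lt_of_le hlt hs⟩
    simp only [catPat, Nat.lt_irrefl, if_false, hlt, if_true] at this
    exact hb' this.symm
  · have hlt : s < t := lt_of_le_of_ne hge fun e => hne e.symm
    have := congrFun h ⟨s, lt_of_lt_of_le hlt ht⟩
    simp only [catPat, Nat.lt_irrefl, if_false, hlt, if_true] at this
    exact hb this

lemma psi_support {n t : ℕ} {x : Fin n → Fin 3} (h : psi n t x ≠ 0) :
    ∃ b : Fin 3, b ≠ 2 ∧ x = catPat n t b := by
  rcases eq_or_ne t 0 with h0 | h0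
  · subst h0
    simp only [psi, if_pos rfl] at h
    refine ⟨0, by decide, ?_⟩
    by_contra hx
    simp [hx] at h
  · simp only [psi, if_neg h0] at h
    by_contra hx
    push_neg at hx
    have h1 : x ≠ catPat n t 0 := fun e => by simpa using hx 0 (by decide) e
    have h2 : x ≠ catPat n t 1 := fun e => by simpa using hx 1 (by decide) e
    simp [h1, h2] at h

lemma psi_mul_star_eq_zero {n t s : ℕ} (ht : t ≤ n) (hs : s ≤ n) (hne : t ≠ s)
    (x : Fin n → Fin 3) : psi n t x * star (psi n s x) = 0 := by
  by_cases h1 : psi n t x = 0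
  · simp [h1]
  by_cases h2 : psi n s x = 0
  · simp [h2]
  obtain ⟨b, hb, rfl⟩ := psi_support h1
  obtain ⟨b', hb', he⟩ := psi_support h2
  exact absurd (catPat_inj ht hs hb hb' he) hne

lemma sqrt2_fact : ((Real.sqrt 2 : ℂ))⁻¹ * ((Real.sqrt 2 : ℂ))⁻¹ = (2:ℂ)⁻¹ := by
  rw [← mul_inv, ← Complex.ofReal_mul, Real.mul_self_sqrt (by norm_num : (0:ℝ) ≤ 2)]
  norm_num

lemma per_t (n : ℕ) (hn : 1 ≤ n) {t : ℕ} (ht : t ≤ n) (d : (Fin n → Fin 3) → ℂ) :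
    ∑ x, d x * (psi n t x * star (psi n t x))
      = if t = 0 then d (catPat n 0 0)
        else (d (catPat n t 0) + d (catPat n t 1)) / 2 := by
  rcases eq_or_ne t 0 with h0 | h0
  · subst h0
    simp only [psi, eq_self_iff_true, if_true]
    have : ∀ x : Fin n → Fin 3,
        d x * ((if x = catPat n 0 0 then (1:ℂ) else 0) *
          star (if x = catPat n 0 0 then (1:ℂ) else 0))
        = if x = catPat n 0 0 then d x else 0 := by
      intro x; by_cases h : x = catPat n 0 0 <;> simp [h]
    simp_rw [this]
    rw [Finset.sum_ite_eq' Finset.univ (catPat n 0 0) d]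
    simp
  · have htpos : 0 < t := Nat.pos_of_ne_zero h0
    have hAB : catPat n t 0 ≠ catPat n t 1 := by
      intro e
      have := congrFun e ⟨0, hn⟩
      simp [catPat, htpos] at this
    simp only [psi, if_neg h0]
    have key : ∀ x : Fin n → Fin 3,
        d x * (((Real.sqrt 2 : ℂ)⁻¹ *
            ((if x = catPat n t 0 then (1:ℂ) else 0) + (if x = catPat n t 1 then 1 else 0))) *
          star ((Real.sqrt 2 : ℂ)⁻¹ *
            ((if x = catPat n t 0 then (1:ℂ) else 0) + (if x = catPat n t 1 then 1 else 0))))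
        = (if x = catPat n t 0 then d x / 2 else 0) +
          (if x = catPat n t 1 then d x / 2 else 0) := by
      intro x
      simp only [star_mul', star_add, star_inv₀, Complex.star_def, Complex.conj_ofReal,
        apply_ite (starRingEnd ℂ), map_zero]
      by_cases h1 : x = catPat n t 0 <;> by_cases h2 : x = catPat n t 1
      · exact absurd (h1.symm.trans h2) hAB
      · simp only [if_pos h1, if_neg h2, _root_.map_one]
        linear_combination d x * sqrt2_fact
      · simp only [if_neg h1, if_pos h2, _root_.map_one]
        linear_combination d x * sqrt2_fact
      · simp only [if_neg h1, if_neg h2]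
        ring
    simp_rw [key]
    rw [Finset.sum_add_distrib,
      Finset.sum_ite_eq' Finset.univ (catPat n t 0) (fun x => d x / 2),
      Finset.sum_ite_eq' Finset.univ (catPat n t 1) (fun x => d x / 2)]
    simp only [Finset.mem_univ, if_true]
    ring

lemma sum_weight (n : ℕ) (hn : 1 ≤ n) (d : (Fin n → Fin 3) → ℂ) :
    ∑ x, d x * outer (histCat n) x x
      = ((n : ℂ) + 1)⁻¹ * ∑ t ∈ Finset.range (n + 1),
          (if t = 0 then d (catPat n 0 0)
           else (d (catPat n t 0) + d (catPat n t 1)) / 2) := by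
  have hc : (Real.sqrt (n+1) : ℂ)⁻¹ * star ((Real.sqrt (n+1) : ℂ)⁻¹) = ((n:ℂ)+1)⁻¹ := by
    rw [star_inv₀, Complex.star_def, Complex.conj_ofReal, ← mul_inv,
      ← Complex.ofReal_mul, Real.mul_self_sqrt (by positivity)]
    push_cast; ring
  have step : ∀ x : Fin n → Fin 3,
      d x * outer (histCat n) x x
        = ((n:ℂ)+1)⁻¹ * ∑ t ∈ Finset.range (n+1), d x * (psi n t x * star (psi n t x)) := by
    intro x
    have diag : ∑ t ∈ Finset.range (n+1), ∑ s ∈ Finset.range (n+1),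
        psi n t x * star (psi n s x)
        = ∑ t ∈ Finset.range (n+1), psi n t x * star (psi n t x) := by
      refine Finset.sum_congr rfl fun t htm => ?_
      refine Finset.sum_eq_single t (fun s hsm hst => ?_) (fun habs => absurd htm habs)
      exact psi_mul_star_eq_zero (Nat.lt_succ_iff.mp (Finset.mem_range.mp htm))
        (Nat.lt_succ_iff.mp (Finset.mem_range.mp hsm)) (fun e => hst e.symm) x
    have hTT : (∑ t ∈ Finset.range (n+1), psi n t x) *
        star (∑ t ∈ Finset.range (n+1), psi n t x)
        = ∑ t ∈ Finset.range (n+1), psi n t x * star (psi n t x) := by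
      rw [star_sum, Finset.sum_mul_sum]
      exact diag
    rw [outer, histCat, star_mul']
    calc d x * (((Real.sqrt (↑n + 1) : ℂ))⁻¹ * (∑ t ∈ Finset.range (n + 1), psi n t x) *
          (star (((Real.sqrt (↑n + 1) : ℂ))⁻¹) * star (∑ t ∈ Finset.range (n + 1), psi n t x)))
        = ((Real.sqrt (↑n + 1) : ℂ)⁻¹ * star ((Real.sqrt (↑n + 1) : ℂ)⁻¹)) *
          (d x * ((∑ t ∈ Finset.range (n + 1), psi n t x) *
            star (∑ t ∈ Finset.range (n + 1), psi n t x))) := by ring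
      _ = ((n:ℂ)+1)⁻¹ * (d x * ∑ t ∈ Finset.range (n+1), psi n t x * star (psi n t x)) := by
          rw [hc, hTT]
      _ = _ := by rw [Finset.mul_sum]
  calc ∑ x, d x * outer (histCat n) x x
      = ∑ x, ((n:ℂ)+1)⁻¹ * ∑ t ∈ Finset.range (n+1), d x * (psi n t x * star (psi n t x)) :=
        Finset.sum_congr rfl fun x _ => step x
    _ = ((n:ℂ)+1)⁻¹ * ∑ t ∈ Finset.range (n+1), ∑ x, d x * (psi n t x * star (psi n t x)) := by
        rw [← Finset.mul_sum, Finset.sum_comm]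
    _ = _ := by
        congr 1
        exact Finset.sum_congr rfl fun t htm =>
          per_t n hn (Nat.lt_succ_iff.mp (Finset.mem_range.mp htm)) d


lemma count_lt (n i : ℕ) (hi : i ≤ n) :
    ∑ t ∈ Finset.range n, (if t < i then (1:ℂ) else 0) = (i : ℂ) := by
  rw [Finset.sum_boole]
  congr 1
  rw [show (Finset.range n).filter (fun t => t < i) = Finset.range i by
    ext t; simp only [Finset.mem_filter, Finset.mem_range]; omega]
  rw [Finset.card_range]

lemma count_ge (n i : ℕ) :
    ∑ t ∈ Finset.range n, (if i ≤ t then (1:ℂ) else 0) = ((n - i : ℕ) : ℂ) := by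
  rw [Finset.sum_boole]
  congr 1
  rw [show (Finset.range n).filter (fun t => i ≤ t) = Finset.Ico i n by
    ext t; simp only [Finset.mem_filter, Finset.mem_range, Finset.mem_Ico]; omega]
  rw [Nat.card_Ico]

lemma ncast_ne (n : ℕ) : ((n:ℂ) + 1) ≠ 0 := by
  have : ((n+1 : ℕ) : ℂ) ≠ 0 := Nat.cast_ne_zero.mpr (Nat.succ_ne_zero n)
  push_cast at this; exact this

lemma valA (n : ℕ) (hn : 1 ≤ n) (i : Fin n) :
    ∑ x, (if x i ∈ ({0,2} : Finset (Fin 3)) then (1:ℂ) else 0) * outer (histCat n) x x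
      = ((((n:ℝ) + (i:ℕ) + 2) / (2 * ((n:ℝ) + 1)) : ℝ) : ℂ) := by
  rw [sum_weight n hn, Finset.sum_range_succ']
  have hterm : ∀ t ∈ Finset.range n,
      (if t + 1 = 0 then (if catPat n 0 0 i ∈ ({0,2} : Finset (Fin 3)) then (1:ℂ) else 0)
       else ((if catPat n (t+1) 0 i ∈ ({0,2} : Finset (Fin 3)) then (1:ℂ) else 0)
          + (if catPat n (t+1) 1 i ∈ ({0,2} : Finset (Fin 3)) then (1:ℂ) else 0)) / 2)
      = (1 + if t < (i:ℕ) then (1:ℂ) else 0) / 2 := by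
    intro t _
    rw [if_neg (Nat.succ_ne_zero t)]
    by_cases h : (i:ℕ) < t + 1
    · simp [catPat, h, show ¬ t < (i:ℕ) by omega]
    · simp [catPat, h, show t < (i:ℕ) by omega]
  rw [Finset.sum_congr rfl hterm, ← Finset.sum_div, Finset.sum_add_distrib,
    count_lt n i (le_of_lt i.isLt)]
  simp only [Finset.sum_const, Finset.card_range, nsmul_eq_mul, mul_one]
  simp only [if_true]
  rw [if_pos (show catPat n 0 0 i ∈ ({0,2} : Finset (Fin 3)) by simp [catPat])]
  have hne : ((n:ℂ)+1) ≠ 0 := ncast_ne n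
  push_cast
  rw [inv_mul_eq_div, div_eq_div_iff hne (mul_ne_zero two_ne_zero hne)]
  ring

lemma valP (n : ℕ) (hn : 1 ≤ n) (j : Fin n) :
    ∑ x, (if x j ∈ ({1} : Finset (Fin 3)) then (1:ℂ) else 0) * outer (histCat n) x x
      = ((((n:ℝ) - (j:ℕ)) / (2 * ((n:ℝ) + 1)) : ℝ) : ℂ) := by
  rw [sum_weight n hn, Finset.sum_range_succ']
  have hterm : ∀ t ∈ Finset.range n,
      (if t + 1 = 0 then (if catPat n 0 0 j ∈ ({1} : Finset (Fin 3)) then (1:ℂ) else 0)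
       else ((if catPat n (t+1) 0 j ∈ ({1} : Finset (Fin 3)) then (1:ℂ) else 0)
          + (if catPat n (t+1) 1 j ∈ ({1} : Finset (Fin 3)) then (1:ℂ) else 0)) / 2)
      = (if (j:ℕ) ≤ t then (1:ℂ) else 0) / 2 := by
    intro t _
    rw [if_neg (Nat.succ_ne_zero t)]
    by_cases h : (j:ℕ) < t + 1
    · simp [catPat, h, show (j:ℕ) ≤ t by omega]
    · simp [catPat, h, show ¬ (j:ℕ) ≤ t by omega]
  rw [Finset.sum_congr rfl hterm, ← Finset.sum_div, count_ge n j]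
  simp only [if_true]
  rw [if_neg (show catPat n 0 0 j ∉ ({1} : Finset (Fin 3)) by simp [catPat])]
  have hne : ((n:ℂ)+1) ≠ 0 := ncast_ne n
  have hjn : ((n - (j:ℕ) : ℕ) : ℂ) = (n:ℂ) - ((j:ℕ):ℂ) :=
    Nat.cast_sub (le_of_lt j.isLt)
  rw [hjn]
  push_cast
  rw [add_zero, inv_mul_eq_div, div_div]

lemma valAP (n : ℕ) (hn : 1 ≤ n) (i j : Fin n) (hij : i < j) :
    ∑ x, ((if x i ∈ ({0,2} : Finset (Fin 3)) then (1:ℂ) else 0) *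
        (if x j ∈ ({1} : Finset (Fin 3)) then (1:ℂ) else 0)) * outer (histCat n) x x
      = 0 := by
  rw [sum_weight n hn]
  have hij' : (i:ℕ) < (j:ℕ) := hij
  rw [Finset.sum_eq_zero, mul_zero]
  intro t _
  rcases t with _ | t
  · simp [catPat]
  · rw [if_neg (Nat.succ_ne_zero t)]
    by_cases h : (i:ℕ) < t + 1
    · have h2 : ¬ ((if (j:ℕ) ≤ t then (0:Fin 3) else 2) = 1) := by split_ifs <;> decide
      simp [catPat, h, h2]
    · have hj2 : ¬ (j:ℕ) < t + 1 := by omega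
      simp [catPat, h, hj2]

lemma sum_transfer {n : ℕ} (S : Finset (Fin n))
    (f : ({i : Fin n // i ∉ S} → Fin 3) → ℂ) (d : (Fin n → Fin 3) → ℂ)
    (hdf : ∀ x, d x = f fun k => x k.1)
    {M N : Matrix (Fin n → Fin 3) (Fin n → Fin 3) ℂ}
    (h : ptrace 3 S M = ptrace 3 S N) :
    ∑ x, d x * M x x = ∑ x, d x * N x x := by
  calc ∑ x, d x * M x x = ∑ x, f (fun k => x k.1) * M x x :=
        Finset.sum_congr rfl fun x _ => by rw [hdf]
    _ = ∑ w, f w * ptrace 3 S M w w := sum_factor_ptrace S f M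
    _ = ∑ w, f w * ptrace 3 S N w w := by rw [h]
    _ = ∑ x, f (fun k => x k.1) * N x x := (sum_factor_ptrace S f N).symm
    _ = ∑ x, d x * N x x := Finset.sum_congr rfl fun x _ => by rw [hdf]

lemma diag_exp_bounds {ι : Type} [Fintype ι] [DecidableEq ι] {M : Matrix ι ι ℂ}
    (hM : IsDensityMatrix M) {d : ι → ℂ} (hd : ∀ x, d x = 0 ∨ d x = 1) :
    0 ≤ ((Matrix.diagonal d * M).trace).re ∧ ((Matrix.diagonal d * M).trace).re ≤ 1 := by
  rw [trace_diag_mul, Complex.re_sum]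
  have hnn : ∀ x : ι, 0 ≤ (M x x).re := fun x =>
    (Complex.le_def.mp (psd_diag_nonneg hM.1 x)).1
  constructor
  · refine Finset.sum_nonneg fun x _ => ?_
    rcases hd x with h | h <;> simp [h, hnn x]
  · have hle : ∀ x : ι, (d x * M x x).re ≤ (M x x).re := fun x => by
      rcases hd x with h | h <;> simp [h, hnn x]
    refine le_trans (Finset.sum_le_sum fun x _ => hle x) ?_
    rw [← Complex.re_sum]
    have h2 : (∑ x, M x x) = M.trace := rfl
    rw [h2, hM.2, Complex.one_re]

lemma trace_expand {n : ℕ} {L : Type} [Fintype L] (p : L → ℝ)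
    (σf : L → Matrix (Fin n → Fin 3) (Fin n → Fin 3) ℂ)
    (d : (Fin n → Fin 3) → ℂ) :
    ((Matrix.diagonal d * ∑ ℓ, p ℓ • σf ℓ).trace).re
      = ∑ ℓ, p ℓ * ((Matrix.diagonal d * σf ℓ).trace).re := by
  rw [Matrix.mul_sum]
  simp_rw [Matrix.mul_smul]
  rw [Matrix.trace_sum]
  simp_rw [Matrix.trace_smul]
  rw [Complex.re_sum]
  exact Finset.sum_congr rfl fun ℓ _ => by rw [Complex.smul_re]; rfl
/-- if `σ = Σ_ℓ p_ℓ σ_ℓ` is a convex combination of states agreeing with the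
history cat state `Ψ_n` outside the corrupted sets `S_ℓ`, and the sites `i < j` each have
corruption probability at most `2ε`, then `Tr((A_i P_j^{(1)})σ) ≤ 4ε`,
`Tr(A_i σ) ≥ 1/2 - ε` and `Tr(P_j^{(1)} σ) ≥ (n+1-(j+1))/(2(n+1)) - ε`
(here `j : Fin n` is `0`-based, so the `1`-based site is `j+1`). -/
theorem cat_noisy_expectations (n : ℕ) (hn : 1 ≤ n) (ε : ℝ) (hε : 0 ≤ ε)
    {L : Type} [Fintype L] (p : L → ℝ) (hp : ∀ ℓ, 0 ≤ p ℓ) (hps : ∑ ℓ, p ℓ = 1)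
    (S : L → Finset (Fin n))
    (σf : L → Matrix (Fin n → Fin 3) (Fin n → Fin 3) ℂ)
    (hσf : ∀ ℓ, IsDensityMatrix (σf ℓ))
    (htr : ∀ ℓ, ptrace 3 (S ℓ) (σf ℓ) = ptrace 3 (S ℓ) (outer (histCat n)))
    (i j : Fin n) (hij : i < j)
    (hi : ∑ ℓ ∈ Finset.univ.filter (fun ℓ => i ∈ S ℓ), p ℓ ≤ 2 * ε)
    (hj : ∑ ℓ ∈ Finset.univ.filter (fun ℓ => j ∈ S ℓ), p ℓ ≤ 2 * ε)
    (σ : Matrix (Fin n → Fin 3) (Fin n → Fin 3) ℂ)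
    (hσ : σ = ∑ ℓ, p ℓ • σf ℓ) :
    ((opA n i * opP1 n j) * σ).trace.re ≤ 4 * ε ∧
    (1 / 2 - ε : ℝ) ≤ ((opA n i) * σ).trace.re ∧
    (((n : ℝ) - (j : ℕ)) / (2 * ((n : ℝ) + 1)) - ε) ≤ ((opP1 n j) * σ).trace.re := by
  -- diagonal weight functions
  set dA : (Fin n → Fin 3) → ℂ :=
    fun x => if x i ∈ ({0,2} : Finset (Fin 3)) then (1:ℂ) else 0 with hdA
  set dP : (Fin n → Fin 3) → ℂ :=
    fun x => if x j ∈ ({1} : Finset (Fin 3)) then (1:ℂ) else 0 with hdP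
  set dAP : (Fin n → Fin 3) → ℂ := fun x => dA x * dP x with hdAP
  have hopA : opA n i = Matrix.diagonal dA := rfl
  have hopP : opP1 n j = Matrix.diagonal dP := rfl
  have hopAP : opA n i * opP1 n j = Matrix.diagonal dAP := by
    rw [hopA, hopP, Matrix.diagonal_mul_diagonal]
  have hdA01 : ∀ x, dA x = 0 ∨ dA x = 1 := fun x => by
    by_cases h : x i ∈ ({0,2} : Finset (Fin 3))
    · exact Or.inr (by simp only [hdA]; rw [if_pos h])
    · exact Or.inl (by simp only [hdA]; rw [if_neg h])
  have hdP01 : ∀ x, dP x = 0 ∨ dP x = 1 := fun x => by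
    by_cases h : x j ∈ ({1} : Finset (Fin 3))
    · exact Or.inr (by simp only [hdP]; rw [if_pos h])
    · exact Or.inl (by simp only [hdP]; rw [if_neg h])
  have hdAP01 : ∀ x, dAP x = 0 ∨ dAP x = 1 := by
    intro x
    rcases hdA01 x with h1 | h1 <;> rcases hdP01 x with h2 | h2 <;>
      simp [hdAP, h1, h2]
  -- expectations for individual states
  set EA : L → ℝ := fun ℓ => ((Matrix.diagonal dA * σf ℓ).trace).re with hEA
  set EP : L → ℝ := fun ℓ => ((Matrix.diagonal dP * σf ℓ).trace).re with hEP
  set EAP : L → ℝ := fun ℓ => ((Matrix.diagonal dAP * σf ℓ).trace).re with hEAP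
  have hEA0 : ∀ ℓ, 0 ≤ EA ℓ := fun ℓ => (diag_exp_bounds (hσf ℓ) hdA01).1
  have hEP0 : ∀ ℓ, 0 ≤ EP ℓ := fun ℓ => (diag_exp_bounds (hσf ℓ) hdP01).1
  have hEAP0 : ∀ ℓ, 0 ≤ EAP ℓ := fun ℓ => (diag_exp_bounds (hσf ℓ) hdAP01).1
  have hEAP1 : ∀ ℓ, EAP ℓ ≤ 1 := fun ℓ => (diag_exp_bounds (hσf ℓ) hdAP01).2
  -- values on good indices
  have hgoodA : ∀ ℓ, i ∉ S ℓ → EA ℓ = ((n:ℝ) + (i:ℕ) + 2) / (2 * ((n:ℝ) + 1)) := by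
    intro ℓ hiℓ
    have htrans := sum_transfer (S ℓ)
      (fun w => if w ⟨i, hiℓ⟩ ∈ ({0,2} : Finset (Fin 3)) then (1:ℂ) else 0)
      dA (fun x => rfl) (htr ℓ)
    rw [hEA]
    simp only [trace_diag_mul]
    rw [htrans, hdA]
    rw [valA n hn i, Complex.ofReal_re]
  have hgoodP : ∀ ℓ, j ∉ S ℓ → EP ℓ = ((n:ℝ) - (j:ℕ)) / (2 * ((n:ℝ) + 1)) := by
    intro ℓ hjℓ
    have htrans := sum_transfer (S ℓ)
      (fun w => if w ⟨j, hjℓ⟩ ∈ ({1} : Finset (Fin 3)) then (1:ℂ) else 0)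
      dP (fun x => rfl) (htr ℓ)
    rw [hEP]
    simp only [trace_diag_mul]
    rw [htrans, hdP]
    rw [valP n hn j, Complex.ofReal_re]
  have hgoodAP : ∀ ℓ, i ∉ S ℓ → j ∉ S ℓ → EAP ℓ = 0 := by
    intro ℓ hiℓ hjℓ
    have htrans := sum_transfer (S ℓ)
      (fun w => (if w ⟨i, hiℓ⟩ ∈ ({0,2} : Finset (Fin 3)) then (1:ℂ) else 0) *
        (if w ⟨j, hjℓ⟩ ∈ ({1} : Finset (Fin 3)) then (1:ℂ) else 0))
      dAP (fun x => rfl) (htr ℓ)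
    rw [hEAP]
    simp only [trace_diag_mul]
    rw [htrans, hdAP]
    simp only [hdA, hdP]
    rw [valAP n hn i j hij, Complex.zero_re]
  -- probability of the good sets
  have hGi : 1 - 2*ε ≤ ∑ ℓ ∈ Finset.univ.filter (fun ℓ => i ∉ S ℓ), p ℓ := by
    have := Finset.sum_filter_add_sum_filter_not Finset.univ (fun ℓ => i ∈ S ℓ) p
    rw [hps] at this
    have h2 : Finset.univ.filter (fun ℓ => i ∉ S ℓ)
        = Finset.univ.filter (fun ℓ => ¬ i ∈ S ℓ) := rfl
    rw [h2]; linarith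
  have hGj : 1 - 2*ε ≤ ∑ ℓ ∈ Finset.univ.filter (fun ℓ => j ∉ S ℓ), p ℓ := by
    have := Finset.sum_filter_add_sum_filter_not Finset.univ (fun ℓ => j ∈ S ℓ) p
    rw [hps] at this
    linarith
  refine ⟨?_, ?_, ?_⟩
  · -- Tr(A_i P_j σ) ≤ 4ε
    rw [hopAP, hσ, trace_expand p σf dAP]
    have hfold : ∀ ℓ, ((Matrix.diagonal dAP * σf ℓ).trace).re = EAP ℓ := fun ℓ => rfl
    simp only [hfold]
    set bad : Finset L := (Finset.univ.filter (fun ℓ => i ∈ S ℓ)) ∪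
      (Finset.univ.filter (fun ℓ => j ∈ S ℓ)) with hbad
    have hsplit := Finset.sum_add_sum_compl bad (fun ℓ => p ℓ * EAP ℓ)
    have hcompl : ∑ ℓ ∈ badᶜ, p ℓ * EAP ℓ = 0 := by
      refine Finset.sum_eq_zero fun ℓ hℓ => ?_
      rw [Finset.mem_compl, hbad, Finset.mem_union] at hℓ
      push_neg at hℓ
      have h1 : i ∉ S ℓ := fun h => hℓ.1 (Finset.mem_filter.mpr ⟨Finset.mem_univ ℓ, h⟩)
      have h2 : j ∉ S ℓ := fun h => hℓ.2 (Finset.mem_filter.mpr ⟨Finset.mem_univ ℓ, h⟩)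
      rw [hgoodAP ℓ h1 h2, mul_zero]
    have hb1 : ∑ ℓ ∈ bad, p ℓ * EAP ℓ ≤ ∑ ℓ ∈ bad, p ℓ :=
      Finset.sum_le_sum fun ℓ _ => mul_le_of_le_one_right (hp ℓ) (hEAP1 ℓ)
    have hb2 : ∑ ℓ ∈ bad, p ℓ ≤ 2*ε + 2*ε := by
      have hu : ∑ ℓ ∈ bad, p ℓ
          ≤ ∑ ℓ ∈ Finset.univ.filter (fun ℓ => i ∈ S ℓ), p ℓ
            + ∑ ℓ ∈ Finset.univ.filter (fun ℓ => j ∈ S ℓ), p ℓ := by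
        rw [hbad, ← Finset.union_sdiff_self_eq_union,
          Finset.sum_union Finset.disjoint_sdiff]
        exact add_le_add le_rfl (Finset.sum_le_sum_of_subset_of_nonneg
          Finset.sdiff_subset fun ℓ _ _ => hp ℓ)
      linarith
    linarith
  · -- Tr(A_i σ) ≥ 1/2 - ε
    rw [hopA, hσ, trace_expand p σf dA]
    have hfold : ∀ ℓ, ((Matrix.diagonal dA * σf ℓ).trace).re = EA ℓ := fun ℓ => rfl
    simp only [hfold]
    set G : Finset L := Finset.univ.filter (fun ℓ => i ∉ S ℓ) with hG
    have h1 : ∑ ℓ ∈ G, p ℓ * EA ℓ ≤ ∑ ℓ, p ℓ * EA ℓ :=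
      Finset.sum_le_sum_of_subset_of_nonneg (Finset.subset_univ G)
        (fun ℓ _ _ => mul_nonneg (hp ℓ) (hEA0 ℓ))
    have h2 : ∑ ℓ ∈ G, p ℓ * (1/2 : ℝ) ≤ ∑ ℓ ∈ G, p ℓ * EA ℓ := by
      refine Finset.sum_le_sum fun ℓ hℓ => ?_
      have hiℓ : i ∉ S ℓ := (Finset.mem_filter.mp hℓ).2
      refine mul_le_mul_of_nonneg_left ?_ (hp ℓ)
      rw [hgoodA ℓ hiℓ, le_div_iff₀ (by positivity)]
      have : (0:ℝ) ≤ ((i:ℕ):ℝ) := Nat.cast_nonneg _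
      nlinarith
    have h3 : ∑ ℓ ∈ G, p ℓ * (1/2 : ℝ) = (∑ ℓ ∈ G, p ℓ) * (1/2) :=
      (Finset.sum_mul ..).symm
    have h4 := hGi
    nlinarith
  · -- Tr(P_j σ) ≥ (n - j)/(2(n+1)) - ε
    rw [hopP, hσ, trace_expand p σf dP]
    have hfold : ∀ ℓ, ((Matrix.diagonal dP * σf ℓ).trace).re = EP ℓ := fun ℓ => rfl
    simp only [hfold]
    set vP : ℝ := ((n:ℝ) - (j:ℕ)) / (2 * ((n:ℝ) + 1)) with hvP
    have hvP0 : 0 ≤ vP := by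
      rw [hvP]
      have : ((j:ℕ):ℝ) ≤ (n:ℝ) := by exact_mod_cast le_of_lt j.isLt
      apply div_nonneg (by linarith) (by positivity)
    have hvPh : vP ≤ 1/2 := by
      rw [hvP, div_le_iff₀ (by positivity)]
      have : (0:ℝ) ≤ ((j:ℕ):ℝ) := Nat.cast_nonneg _
      nlinarith
    set G : Finset L := Finset.univ.filter (fun ℓ => j ∉ S ℓ) with hG
    have h1 : ∑ ℓ ∈ G, p ℓ * EP ℓ ≤ ∑ ℓ, p ℓ * EP ℓ :=
      Finset.sum_le_sum_of_subset_of_nonneg (Finset.subset_univ G)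
        (fun ℓ _ _ => mul_nonneg (hp ℓ) (hEP0 ℓ))
    have h2 : ∑ ℓ ∈ G, p ℓ * EP ℓ = (∑ ℓ ∈ G, p ℓ) * vP := by
      rw [Finset.sum_mul]
      refine Finset.sum_congr rfl fun ℓ hℓ => ?_
      have hjℓ : j ∉ S ℓ := (Finset.mem_filter.mp hℓ).2
      rw [hgoodP ℓ hjℓ, hvP]
    have h4 := hGj
    have h5 : (1 - 2*ε) * vP ≤ (∑ ℓ ∈ G, p ℓ) * vP :=
      mul_le_mul_of_nonneg_right h4 hvP0
    nlinarith

end CatState
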